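/- Let p be a prime. Every group belonging to one of the families 𝒢₇, 𝒢₈, 𝒢₉ is indecomposable. -/

import Mathlib

/-- A group is indecomposable if whenever it is the internal direct product of two
subgroups `H` and `K`, one of them is trivial. -/
def IsIndecomposable (G : Type*) [Group G] : Prop :=
  ∀ H K : Subgroup G,
    (∀ h ∈ H, ∀ k ∈ K, Commute h k) →
    H ⊓ K = ⊥ →
    (∀ g : G, ∃ h ∈ H, ∃ k ∈ K, g = h * k) →
    H = ⊥ ∨ K = ⊥

/-- Membership in family 𝒢₇: `G = ⟨x, y, t₁, t₂, t₃⟩`, `Z(G) = ⟨t₁⟩ × ⟨t₂⟩ × ⟨t₃⟩`,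
`o(tᵢ) = p^{mᵢ}`, `x^p = t₂`, `y^p = t₃`, `[x,y] = t₁^{p^{m₁-1}}`. -/
def InFamilyG7 (p m₁ m₂ m₃ : ℕ) (G : Type*) [Group G] : Prop :=
  ∃ x y t₁ t₂ t₃ : G,
    Subgroup.closure {x, y, t₁, t₂, t₃} = ⊤ ∧
    Subgroup.center G = Subgroup.closure {t₁, t₂, t₃} ∧
    Subgroup.zpowers t₁ ⊓ Subgroup.closure {t₂, t₃} = ⊥ ∧
    Subgroup.zpowers t₂ ⊓ Subgroup.closure {t₁, t₃} = ⊥ ∧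
    Subgroup.zpowers t₃ ⊓ Subgroup.closure {t₁, t₂} = ⊥ ∧
    orderOf t₁ = p ^ m₁ ∧ orderOf t₂ = p ^ m₂ ∧ orderOf t₃ = p ^ m₃ ∧
    x ^ p = t₂ ∧ y ^ p = t₃ ∧
    x⁻¹ * y⁻¹ * x * y = t₁ ^ p ^ (m₁ - 1)

/-- Membership in family 𝒢₈: `G = ⟨x, y, t₁, t₂, u₁⟩`, `Z(G) = ⟨t₁⟩ × ⟨t₂⟩ × ⟨u₁⟩`,
`o(t₁) = p^{m₁}`, `o(t₂) = p^{m₂}`, `o(u₁) = ∞`, `x^p = t₂`, `y^p = u₁`,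
`[x,y] = t₁^{p^{m₁-1}}`. -/
def InFamilyG8 (p m₁ m₂ : ℕ) (G : Type*) [Group G] : Prop :=
  ∃ x y t₁ t₂ u₁ : G,
    Subgroup.closure {x, y, t₁, t₂, u₁} = ⊤ ∧
    Subgroup.center G = Subgroup.closure {t₁, t₂, u₁} ∧
    Subgroup.zpowers t₁ ⊓ Subgroup.closure {t₂, u₁} = ⊥ ∧
    Subgroup.zpowers t₂ ⊓ Subgroup.closure {t₁, u₁} = ⊥ ∧
    Subgroup.zpowers u₁ ⊓ Subgroup.closure {t₁, t₂} = ⊥ ∧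
    orderOf t₁ = p ^ m₁ ∧ orderOf t₂ = p ^ m₂ ∧ ¬ IsOfFinOrder u₁ ∧
    x ^ p = t₂ ∧ y ^ p = u₁ ∧
    x⁻¹ * y⁻¹ * x * y = t₁ ^ p ^ (m₁ - 1)

/-- Membership in family 𝒢₉: `G = ⟨x, y, t₁, u₁, u₂⟩`, `Z(G) = ⟨t₁⟩ × ⟨u₁⟩ × ⟨u₂⟩`,
`o(t₁) = p^{m₁}`, `o(u₁) = o(u₂) = ∞`, `x^p = u₁`, `y^p = u₂`,
`[x,y] = t₁^{p^{m₁-1}}`. -/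
def InFamilyG9 (p m₁ : ℕ) (G : Type*) [Group G] : Prop :=
  ∃ x y t₁ u₁ u₂ : G,
    Subgroup.closure {x, y, t₁, u₁, u₂} = ⊤ ∧
    Subgroup.center G = Subgroup.closure {t₁, u₁, u₂} ∧
    Subgroup.zpowers t₁ ⊓ Subgroup.closure {u₁, u₂} = ⊥ ∧
    Subgroup.zpowers u₁ ⊓ Subgroup.closure {t₁, u₂} = ⊥ ∧
    Subgroup.zpowers u₂ ⊓ Subgroup.closure {t₁, u₁} = ⊥ ∧
    orderOf t₁ = p ^ m₁ ∧ ¬ IsOfFinOrder u₁ ∧ ¬ IsOfFinOrder u₂ ∧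
    x ^ p = u₁ ∧ y ^ p = u₂ ∧
    x⁻¹ * y⁻¹ * x * y = t₁ ^ p ^ (m₁ - 1)

section Aux

open Subgroup

variable {G : Type*} [Group G]

lemma aux_central_comm {a : G} (ha : a ∈ Subgroup.center G) (g : G) : Commute a g :=
  (Subgroup.mem_center_iff.mp ha g).symm

lemma aux_commute_of_eq_one {a b : G} (h : a⁻¹ * b⁻¹ * a * b = 1) : Commute a b := by
  have : a * b = b * a * (a⁻¹ * b⁻¹ * a * b) := by group
  rw [h, mul_one] at this
  exact this

lemma aux_commute_all {S : Set G}
    (hS : ∀ a ∈ S, ∀ b ∈ S, Commute a b) (htop : Subgroup.closure S = ⊤) (g₁ g₂ : G) :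
    Commute g₁ g₂ := by
  have h1 : Subgroup.closure S ≤ Subgroup.centralizer S :=
    (Subgroup.closure_le _).mpr fun a ha => Subgroup.mem_centralizer_iff.mpr
      fun b hb => (hS a ha b hb).symm.eq
  have h2 : ∀ a ∈ S, a ∈ Subgroup.center G := by
    intro a ha
    rw [Subgroup.mem_center_iff]
    intro g
    exact (Subgroup.mem_centralizer_iff.mp (h1 (htop ▸ Subgroup.mem_top g)) a ha).symm
  have h3 : Subgroup.closure S ≤ Subgroup.center G := (Subgroup.closure_le _).mpr h2
  exact Subgroup.mem_center_iff.mp (h3 (htop ▸ Subgroup.mem_top g₂)) g₁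

/-- all commutators lie in the cyclic central subgroup generated by `c = [x,y]` -/
lemma aux_commutator_mem {x y t₁ w₂ w₃ c : G}
    (hgen : Subgroup.closure {x, y, t₁, w₂, w₃} = ⊤)
    (ht : t₁ ∈ Subgroup.center G) (hw₂ : w₂ ∈ Subgroup.center G) (hw₃ : w₃ ∈ Subgroup.center G)
    (hc : x⁻¹ * y⁻¹ * x * y = c) (hcz : c ∈ Subgroup.center G) :
    ∀ g g' : G, g⁻¹ * g'⁻¹ * g * g' ∈ Subgroup.zpowers c := by
  set C : Subgroup G := Subgroup.zpowers c with hC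
  have hCcent : C ≤ Subgroup.center G := (Subgroup.zpowers_le).mpr hcz
  have hnorm : C.Normal := by
    constructor
    intro n hn g
    have h1 : n * g = g * n := (aux_central_comm (hCcent hn) g).eq
    have h2 : g * n * g⁻¹ = n := by rw [← h1]; group
    rw [h2]; exact hn
  letI := hnorm
  set Q := G ⧸ C
  let mk : G →* Q := QuotientGroup.mk' C
  have hmksurj : Function.Surjective mk := QuotientGroup.mk'_surjective C
  -- generators of Q
  have hgenQ : Subgroup.closure (mk '' {x, y, t₁, w₂, w₃}) = (⊤ : Subgroup Q) := by
    rw [← MonoidHom.map_closure, hgen]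
    exact Subgroup.map_top_of_surjective mk hmksurj
  -- central images are central in Q
  have hcentQ : ∀ a : G, a ∈ Subgroup.center G → ∀ q : Q, Commute (mk a) q := by
    intro a ha q
    obtain ⟨g, rfl⟩ := hmksurj q
    exact (aux_central_comm ha g).map mk
  have hxy : Commute (mk x) (mk y) := by
    apply aux_commute_of_eq_one
    have : (mk x)⁻¹ * (mk y)⁻¹ * (mk x) * (mk y) = mk (x⁻¹ * y⁻¹ * x * y) := by
      simp [map_mul, map_inv]
    rw [this, hc]
    rw [QuotientGroup.mk'_apply, QuotientGroup.eq_one_iff]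
    exact Subgroup.mem_zpowers c
  have hpairs : ∀ a ∈ mk '' ({x, y, t₁, w₂, w₃} : Set G), ∀ b ∈ mk '' ({x, y, t₁, w₂, w₃} : Set G),
      Commute a b := by
    rintro a ⟨ga, hga, rfl⟩ b ⟨gb, hgb, rfl⟩
    rcases hga with rfl | rfl | rfl | rfl | rfl
    · rcases hgb with rfl | rfl | rfl | rfl | rfl
      · exact Commute.refl _
      · exact hxy
      · exact (hcentQ _ ht _).symm
      · exact (hcentQ _ hw₂ _).symm
      · exact (hcentQ _ hw₃ _).symm
    · rcases hgb with rfl | rfl | rfl | rfl | rfl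
      · exact hxy.symm
      · exact Commute.refl _
      · exact (hcentQ _ ht _).symm
      · exact (hcentQ _ hw₂ _).symm
      · exact (hcentQ _ hw₃ _).symm
    · exact hcentQ _ ht _
    · exact hcentQ _ hw₂ _
    · exact hcentQ _ hw₃ _
  have hQcomm : ∀ q q' : Q, Commute q q' := aux_commute_all hpairs hgenQ
  intro g g'
  have : mk (g⁻¹ * g'⁻¹ * g * g') = 1 := by
    have hcmq : mk g * mk g' = mk g' * mk g := hQcomm (mk g) (mk g')
    simp only [map_mul, map_inv]
    rw [show (mk g)⁻¹ * (mk g')⁻¹ * mk g * mk g' = (mk g' * mk g)⁻¹ * (mk g * mk g') by group,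
      ← hcmq]
    group
  rwa [QuotientGroup.mk'_apply, QuotientGroup.eq_one_iff] at this

lemma aux_div_of_order {w : G} {p mw : ℕ} (hw : orderOf w = p ^ mw) :
    ∀ b : ℤ, (∀ N : ℕ, ∃ b' : ℤ, w ^ b = w ^ ((p:ℤ)^N * b')) → w ^ b = 1 := by
  intro b h
  obtain ⟨b', hb⟩ := h mw
  rw [hb, show ((p:ℤ)^mw * b') = ((p^mw : ℕ) : ℤ) * b' by push_cast; ring, zpow_mul,
    zpow_natCast, ← hw, pow_orderOf_eq_one, one_zpow]

lemma aux_div_of_infinite {w : G} (hw : ¬ IsOfFinOrder w) {p : ℕ} (hp : 1 < p) :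
    ∀ b : ℤ, (∀ N : ℕ, ∃ b' : ℤ, w ^ b = w ^ ((p:ℤ)^N * b')) → w ^ b = 1 := by
  intro b h
  have hb0 : b = 0 := by
    by_contra hb0
    obtain ⟨b', hb⟩ := h b.natAbs
    have hinj : Function.Injective (fun n : ℤ => w ^ n) :=
      injective_zpow_iff_not_isOfFinOrder.mpr hw
    have heq : b = (p:ℤ) ^ (b.natAbs) * b' := hinj hb
    have hdvd : ((p:ℤ) ^ (b.natAbs)) ∣ b := ⟨b', heq⟩
    have hdvd' : (p ^ (b.natAbs) : ℕ) ∣ b.natAbs := by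
      have h2 : ((p:ℤ) ^ b.natAbs).natAbs ∣ b.natAbs := Int.natAbs_dvd_natAbs.mpr hdvd
      simpa [Int.natAbs_pow] using h2
    have hle : p ^ b.natAbs ≤ b.natAbs := Nat.le_of_dvd (Int.natAbs_pos.mpr hb0) hdvd'
    have hlt : b.natAbs < p ^ b.natAbs := Nat.lt_pow_self hp
    omega
  rw [hb0, zpow_zero]

/-- merge two pairs when `u` commutes with everything -/
lemma aux_merge {u : G} (hu : ∀ g : G, Commute u g) (a b v : G) :
    (a * u) * (b * v) = (a * b) * (u * v) := by
  calc (a * u) * (b * v) = a * (u * b) * v := by group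
    _ = a * (b * u) * v := by rw [(hu b).eq]
    _ = (a * b) * (u * v) := by group

lemma aux_merge6 {w u w' : G} (hw : ∀ g : G, Commute w g) (hu : ∀ g : G, Commute u g)
    (hw' : ∀ g : G, Commute w' g) (t t' u' : G) :
    (t * w * u) * (t' * w' * u') = (t * t') * (w * w') * (u * u') := by
  rw [aux_merge hu (t * w) (t' * w') u', aux_merge hw t t' w']

/-- every element of the closure of three central elements is a product of zpowers -/
lemma aux_decomp {t w₂ w₃ : G} (ht : t ∈ Subgroup.center G) (hw₂ : w₂ ∈ Subgroup.center G)
    (hw₃ : w₃ ∈ Subgroup.center G) {z : G} (hz : z ∈ Subgroup.closure {t, w₂, w₃}) :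
    ∃ i j l : ℤ, z = t ^ i * w₂ ^ j * w₃ ^ l := by
  have hW : ∀ (n : ℤ) (g : G), Commute (w₂ ^ n) g := fun n g => (aux_central_comm hw₂ g).zpow_left n
  have hU : ∀ (n : ℤ) (g : G), Commute (w₃ ^ n) g := fun n g => (aux_central_comm hw₃ g).zpow_left n
  have E : ∀ i j l i' j' l' : ℤ, (t ^ i * w₂ ^ j * w₃ ^ l) * (t ^ i' * w₂ ^ j' * w₃ ^ l')
      = t ^ (i + i') * w₂ ^ (j + j') * w₃ ^ (l + l') := by
    intro i j l i' j' l'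
    rw [aux_merge6 (hW j) (hU l) (hW j'), ← zpow_add, ← zpow_add, ← zpow_add]
  induction hz using Subgroup.closure_induction with
  | mem g hg =>
    rcases hg with rfl | rfl | rfl
    · exact ⟨1, 0, 0, by simp⟩
    · exact ⟨0, 1, 0, by simp⟩
    · exact ⟨0, 0, 1, by simp⟩
  | one => exact ⟨0, 0, 0, by simp⟩
  | mul g g' _ _ ih ih' =>
    obtain ⟨i, j, l, rfl⟩ := ih
    obtain ⟨i', j', l', rfl⟩ := ih'
    exact ⟨i + i', j + j', l + l', E i j l i' j' l'⟩
  | inv g _ ih =>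
    obtain ⟨i, j, l, rfl⟩ := ih
    refine ⟨-i, -j, -l, (eq_inv_of_mul_eq_one_left ?_).symm⟩
    rw [E]
    simp

lemma aux_merge3p {u v : G} (hu : ∀ g : G, Commute u g) (hv : ∀ g : G, Commute v g)
    (A B C w : G) :
    (A * u) * (B * v) * (C * w) = (A * B * C) * (u * v * w) := by
  rw [aux_merge hu A B v, aux_merge (fun g => (hu g).mul_left (hv g)) (A*B) C w]

lemma aux_zpow3 {B C : G} (hB : ∀ g : G, Commute B g) (hC : ∀ g : G, Commute C g)
    (A : G) (e : ℤ) : (A * B * C) ^ e = A ^ e * B ^ e * C ^ e := by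
  rw [(hC (A*B)).symm.mul_zpow, (hB A).symm.mul_zpow]

lemma aux_core (p m : ℕ) (hp : p.Prime) (hm : 1 ≤ m)
    (x y t₁ w₂ w₃ : G)
    (hZ : Subgroup.center G = Subgroup.closure {t₁, w₂, w₃})
    (hI1 : Subgroup.zpowers t₁ ⊓ Subgroup.closure {w₂, w₃} = ⊥)
    (hI2 : Subgroup.zpowers w₂ ⊓ Subgroup.closure {t₁, w₃} = ⊥)
    (ht₁ : orderOf t₁ = p ^ m)
    (hdiv₂ : ∀ b : ℤ, (∀ N : ℕ, ∃ b' : ℤ, w₂ ^ b = w₂ ^ ((p:ℤ)^N * b')) → w₂ ^ b = 1)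
    (hdiv₃ : ∀ b : ℤ, (∀ N : ℕ, ∃ b' : ℤ, w₃ ^ b = w₃ ^ ((p:ℤ)^N * b')) → w₃ ^ b = 1)
    (hx : x ^ p = w₂) (hy : y ^ p = w₃)
    (hrel : x⁻¹ * y⁻¹ * x * y = t₁ ^ p ^ (m - 1))
    (H K : Subgroup G)
    (hcomm : ∀ h ∈ H, ∀ k ∈ K, Commute h k)
    (hdisj : H ⊓ K = ⊥)
    (hsurj : ∀ g : G, ∃ h ∈ H, ∃ k ∈ K, g = h * k)
    (hKZ : K ≤ Subgroup.center G) : K = ⊥ := by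
  set P : ℤ := (p : ℤ) with hPdef
  -- basic central elements
  have ht₁Z : t₁ ∈ Subgroup.center G := by
    rw [hZ]; exact Subgroup.subset_closure (by simp)
  have hw₂Z : w₂ ∈ Subgroup.center G := by
    rw [hZ]; exact Subgroup.subset_closure (by simp)
  have hw₃Z : w₃ ∈ Subgroup.center G := by
    rw [hZ]; exact Subgroup.subset_closure (by simp)
  have cT : ∀ g : G, Commute t₁ g := aux_central_comm ht₁Z
  have cW : ∀ g : G, Commute w₂ g := aux_central_comm hw₂Z
  have cU : ∀ g : G, Commute w₃ g := aux_central_comm hw₃Z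
  have hW : ∀ (n : ℤ) (g : G), Commute (w₂ ^ n) g := fun n g => (cW g).zpow_left n
  have hU : ∀ (n : ℤ) (g : G), Commute (w₃ ^ n) g := fun n g => (cU g).zpow_left n
  have E : ∀ i j l i' j' l' : ℤ, (t₁ ^ i * w₂ ^ j * w₃ ^ l) * (t₁ ^ i' * w₂ ^ j' * w₃ ^ l')
      = t₁ ^ (i + i') * w₂ ^ (j + j') * w₃ ^ (l + l') := by
    intro i j l i' j' l'
    rw [aux_merge6 (hW j) (hU l) (hW j'), ← zpow_add, ← zpow_add, ← zpow_add]
  have sep1 : ∀ i j l : ℤ, t₁ ^ i * w₂ ^ j * w₃ ^ l = 1 →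
      t₁ ^ i = 1 ∧ w₂ ^ j = 1 ∧ w₃ ^ l = 1 := by
    intro i j l h
    have h1 : t₁ ^ i * (w₂ ^ j * w₃ ^ l) = 1 := by rw [← mul_assoc]; exact h
    have ht1 : t₁ ^ i = (w₂ ^ j * w₃ ^ l)⁻¹ := by
      rw [eq_inv_iff_mul_eq_one]; exact h1
    have hmem : t₁ ^ i ∈ Subgroup.zpowers t₁ ⊓ Subgroup.closure {w₂, w₃} := by
      refine ⟨Subgroup.zpow_mem _ (Subgroup.mem_zpowers t₁) i, ?_⟩
      rw [ht1]
      exact Subgroup.inv_mem _ (Subgroup.mul_mem _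
        (Subgroup.zpow_mem _ (Subgroup.subset_closure (by simp)) j)
        (Subgroup.zpow_mem _ (Subgroup.subset_closure (by simp)) l))
    rw [hI1] at hmem
    have ht1' : t₁ ^ i = 1 := hmem
    have h2 : w₂ ^ j * w₃ ^ l = 1 := by
      rw [ht1'] at h1; rw [← h1]; group
    have hw2 : w₂ ^ j = (w₃ ^ l)⁻¹ := by
      rw [eq_inv_iff_mul_eq_one]; exact h2
    have hmem2 : w₂ ^ j ∈ Subgroup.zpowers w₂ ⊓ Subgroup.closure {t₁, w₃} := by
      refine ⟨Subgroup.zpow_mem _ (Subgroup.mem_zpowers w₂) j, ?_⟩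
      rw [hw2]
      exact Subgroup.inv_mem _ (Subgroup.zpow_mem _ (Subgroup.subset_closure (by simp)) l)
    rw [hI2] at hmem2
    have hw2' : w₂ ^ j = 1 := hmem2
    have hw3' : w₃ ^ l = 1 := by rw [hw2'] at h2; rw [← h2]; group
    exact ⟨ht1', hw2', hw3'⟩
  have sep2 : ∀ i j l i' j' l' : ℤ, t₁ ^ i * w₂ ^ j * w₃ ^ l = t₁ ^ i' * w₂ ^ j' * w₃ ^ l' →
      t₁ ^ i = t₁ ^ i' ∧ w₂ ^ j = w₂ ^ j' ∧ w₃ ^ l = w₃ ^ l' := by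
    intro i j l i' j' l' h
    have h0 : (t₁ ^ i * w₂ ^ j * w₃ ^ l) * (t₁ ^ (-i') * w₂ ^ (-j') * w₃ ^ (-l')) = 1 := by
      rw [h, E]
      simp
    rw [E] at h0
    obtain ⟨e1, e2, e3⟩ := sep1 _ _ _ h0
    refine ⟨?_, ?_, ?_⟩
    · have := congrArg (· * t₁ ^ i') e1
      simpa [← zpow_add] using this
    · have := congrArg (· * w₂ ^ j') e2
      simpa [← zpow_add] using this
    · have := congrArg (· * w₃ ^ l') e3
      simpa [← zpow_add] using this
  -- order facts
  have hPm : t₁ ^ (P ^ m) = 1 := by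
    have : ((p ^ m : ℕ) : ℤ) = P ^ m := by push_cast [hPdef]; ring
    rw [← this, zpow_natCast, ← ht₁, pow_orderOf_eq_one]
  -- decompositions of the generators
  obtain ⟨a₁, ha₁, b₁, hb₁, hxe⟩ := hsurj x
  obtain ⟨a₂, ha₂, b₂, hb₂, hye⟩ := hsurj y
  obtain ⟨a₃, ha₃, b₃, hb₃, hte⟩ := hsurj t₁
  have hb₁Z : b₁ ∈ Subgroup.center G := hKZ hb₁
  have hb₂Z : b₂ ∈ Subgroup.center G := hKZ hb₂
  have hb₃Z : b₃ ∈ Subgroup.center G := hKZ hb₃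
  have B1 : ∀ g : G, Commute b₁ g := aux_central_comm hb₁Z
  have B2 : ∀ g : G, Commute b₂ g := aux_central_comm hb₂Z
  have B3 : ∀ g : G, Commute b₃ g := aux_central_comm hb₃Z
  have hbot : ∀ g : G, g ∈ H → g ∈ K → g = 1 := by
    intro g hgH hgK
    have : g ∈ H ⊓ K := ⟨hgH, hgK⟩
    rw [hdisj] at this
    exact this
  -- a-parts of central products are central
  have ha₃Z : a₃ ∈ Subgroup.center G := by
    have : a₃ = t₁ * b₃⁻¹ := by rw [hte]; group
    rw [this]
    exact Subgroup.mul_mem _ ht₁Z (Subgroup.inv_mem _ hb₃Z)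
  have A3 : ∀ g : G, Commute a₃ g := aux_central_comm ha₃Z
  have hsplit₂ : w₂ = a₁ ^ p * b₁ ^ p := by
    rw [← hx, hxe, ((B1 a₁).symm).mul_pow]
  have hsplit₃ : w₃ = a₂ ^ p * b₂ ^ p := by
    rw [← hy, hye, ((B2 a₂).symm).mul_pow]
  have hA1pZ : a₁ ^ p ∈ Subgroup.center G := by
    have : a₁ ^ p = w₂ * (b₁ ^ p)⁻¹ := by rw [hsplit₂]; group
    rw [this]
    exact Subgroup.mul_mem _ hw₂Z (Subgroup.inv_mem _ (Subgroup.pow_mem _ hb₁Z p))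
  have hA2pZ : a₂ ^ p ∈ Subgroup.center G := by
    have : a₂ ^ p = w₃ * (b₂ ^ p)⁻¹ := by rw [hsplit₃]; group
    rw [this]
    exact Subgroup.mul_mem _ hw₃Z (Subgroup.inv_mem _ (Subgroup.pow_mem _ hb₂Z p))
  have A1p : ∀ g : G, Commute (a₁ ^ p) g := aux_central_comm hA1pZ
  have A2p : ∀ g : G, Commute (a₂ ^ p) g := aux_central_comm hA2pZ
  -- the commutator of x and y lies in H
  have hccH : t₁ ^ (P ^ (m - 1)) ∈ H := by
    have hcast : t₁ ^ (p ^ (m - 1) : ℕ) = t₁ ^ (P ^ (m - 1)) := by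
      have : ((p ^ (m - 1) : ℕ) : ℤ) = P ^ (m - 1) := by push_cast [hPdef]; ring
      rw [← this, zpow_natCast]
    have hxinv : x⁻¹ = a₁⁻¹ * b₁⁻¹ := by
      rw [hxe, mul_inv_rev, ((B1 a₁⁻¹).inv_left).eq]
    have hyinv : y⁻¹ = a₂⁻¹ * b₂⁻¹ := by
      rw [hye, mul_inv_rev, ((B2 a₂⁻¹).inv_left).eq]
    have key : x⁻¹ * y⁻¹ * x * y
        = (a₁⁻¹ * a₂⁻¹ * a₁ * a₂) * (b₁⁻¹ * b₂⁻¹ * b₁ * b₂) := by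
      calc x⁻¹ * y⁻¹ * x * y
          = ((a₁⁻¹ * b₁⁻¹) * (a₂⁻¹ * b₂⁻¹)) * ((a₁ * b₁) * (a₂ * b₂)) := by
            rw [hxinv, hyinv, hxe, hye]; group
        _ = ((a₁⁻¹ * a₂⁻¹) * (b₁⁻¹ * b₂⁻¹)) * ((a₁ * a₂) * (b₁ * b₂)) := by
            rw [aux_merge (fun g => (B1 g).inv_left) a₁⁻¹ a₂⁻¹ b₂⁻¹,
              aux_merge B1 a₁ a₂ b₂]
        _ = ((a₁⁻¹ * a₂⁻¹) * (a₁ * a₂)) * ((b₁⁻¹ * b₂⁻¹) * (b₁ * b₂)) := by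
            rw [aux_merge (fun g => ((B1 g).inv_left).mul_left ((B2 g).inv_left)) _ _ _]
        _ = (a₁⁻¹ * a₂⁻¹ * a₁ * a₂) * (b₁⁻¹ * b₂⁻¹ * b₁ * b₂) := by group
    have hbb : b₁⁻¹ * b₂⁻¹ * b₁ * b₂ = 1 := by
      rw [show b₁⁻¹ * b₂⁻¹ * b₁ * b₂ = b₁⁻¹ * (b₂⁻¹ * b₁) * b₂ by group,
        ((B1 b₂⁻¹).symm).eq]
      group
    have haa : a₁⁻¹ * a₂⁻¹ * a₁ * a₂ = t₁ ^ (P ^ (m - 1)) := by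
      have h' := hrel
      rw [key, hbb, mul_one] at h'
      rw [← hcast]
      exact h'
    rw [← haa]
    exact Subgroup.mul_mem _ (Subgroup.mul_mem _ (Subgroup.mul_mem _
      (Subgroup.inv_mem _ ha₁) (Subgroup.inv_mem _ ha₂)) ha₁) ha₂
  -- torsion bound for the K-part of t₁
  have hb₃tor : b₃ ^ (P ^ (m - 1)) = 1 := by
    have hsplit : t₁ ^ (P ^ (m - 1)) = a₃ ^ (P ^ (m - 1)) * b₃ ^ (P ^ (m - 1)) := by
      rw [hte, ((B3 a₃).symm).mul_zpow]
    have : b₃ ^ (P ^ (m - 1)) = (a₃ ^ (P ^ (m - 1)))⁻¹ * t₁ ^ (P ^ (m - 1)) := by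
      rw [hsplit]; group
    refine hbot _ ?_ (Subgroup.zpow_mem _ hb₃ _)
    rw [this]
    exact Subgroup.mul_mem _ (Subgroup.inv_mem _ (Subgroup.zpow_mem _ ha₃ _)) hccH
  -- every element of K decomposes through b₃ and p-th powers
  have star : ∀ k ∈ K, ∀ i j l : ℤ, k = t₁ ^ i * w₂ ^ j * w₃ ^ l →
      ∃ v ∈ K, k = b₃ ^ i * v ^ P := by
    intro k hk i j l hkd
    have hk1 : k = (a₃ ^ i * b₃ ^ i) * ((a₁ ^ p) ^ j * (b₁ ^ p) ^ j)
        * ((a₂ ^ p) ^ l * (b₂ ^ p) ^ l) := by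
      rw [hkd, hte, hsplit₂, hsplit₃, ((B3 a₃).symm).mul_zpow,
        (((B1 (a₁ ^ p)).pow_left p).symm).mul_zpow,
        (((B2 (a₂ ^ p)).pow_left p).symm).mul_zpow]
    have hk2 : k = (a₃ ^ i * (a₁ ^ p) ^ j * (a₂ ^ p) ^ l)
        * (b₃ ^ i * (b₁ ^ p) ^ j * (b₂ ^ p) ^ l) := by
      rw [hk1, aux_merge3p (fun g => (B3 g).zpow_left i)
        (fun g => ((B1 g).pow_left p).zpow_left j) _ _ _ _]
    set hpart := a₃ ^ i * (a₁ ^ p) ^ j * (a₂ ^ p) ^ l with hhp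
    set kpart := b₃ ^ i * (b₁ ^ p) ^ j * (b₂ ^ p) ^ l with hkp
    have hpartH : hpart ∈ H :=
      Subgroup.mul_mem _ (Subgroup.mul_mem _ (Subgroup.zpow_mem _ ha₃ _)
        (Subgroup.zpow_mem _ (Subgroup.pow_mem _ ha₁ _) _)) (Subgroup.zpow_mem _ (Subgroup.pow_mem _ ha₂ _) _)
    have kpartK : kpart ∈ K :=
      Subgroup.mul_mem _ (Subgroup.mul_mem _ (Subgroup.zpow_mem _ hb₃ _)
        (Subgroup.zpow_mem _ (Subgroup.pow_mem _ hb₁ _) _)) (Subgroup.zpow_mem _ (Subgroup.pow_mem _ hb₂ _) _)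
    have hpart1 : hpart = 1 := by
      refine hbot _ hpartH ?_
      have : hpart = k * kpart⁻¹ := by rw [hk2]; group
      rw [this]
      exact Subgroup.mul_mem _ hk (Subgroup.inv_mem _ kpartK)
    refine ⟨b₁ ^ j * b₂ ^ l, Subgroup.mul_mem _ (Subgroup.zpow_mem _ hb₁ _) (Subgroup.zpow_mem _ hb₂ _), ?_⟩
    have hvp : (b₁ ^ j * b₂ ^ l) ^ P = (b₁ ^ p) ^ j * (b₂ ^ p) ^ l := by
      rw [(((B2 (b₁ ^ j)).zpow_left l).symm).mul_zpow]
      congr 1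
      · rw [← zpow_natCast b₁ p, ← zpow_mul, ← zpow_mul, mul_comm]
      · rw [← zpow_natCast b₂ p, ← zpow_mul, ← zpow_mul, mul_comm]
    rw [hvp, hk2, hpart1, one_mul, hkp, mul_assoc]
  -- iterate the decomposition
  have iter : ∀ n : ℕ, ∀ k ∈ K, ∃ A : ℤ, ∃ v ∈ K, k = b₃ ^ A * v ^ (P ^ n) := by
    intro n
    induction n with
    | zero =>
      intro k hk
      exact ⟨0, k, hk, by simp⟩
    | succ n ih =>
      intro k hk
      obtain ⟨A, v, hvK, hke⟩ := ih k hk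
      have hvZ : v ∈ Subgroup.center G := hKZ hvK
      have hvd : v ∈ Subgroup.closure {t₁, w₂, w₃} := by rw [← hZ]; exact hvZ
      obtain ⟨i, j, l, hvdec⟩ := aux_decomp ht₁Z hw₂Z hw₃Z hvd
      obtain ⟨u, huK, hve⟩ := star v hvK i j l hvdec
      have hucomm : ∀ g : G, Commute u g := aux_central_comm (hKZ huK)
      refine ⟨A + i * P ^ n, u, huK, ?_⟩
      rw [hke, hve, ((B3 (u ^ P)).zpow_left i).mul_zpow, ← zpow_mul, ← zpow_mul,
        ← mul_assoc, ← zpow_add, show P * P ^ n = P ^ (n + 1) by ring]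
  -- elements divisible by arbitrarily high p-powers in the center are trivial
  have divkill : ∀ z : G, (∀ N : ℕ, ∃ u, u ∈ Subgroup.center G ∧ z = u ^ (P ^ N)) → z = 1 := by
    intro z hdiv
    have hzZ : z ∈ Subgroup.center G := by
      obtain ⟨u, huZ, hzu⟩ := hdiv 0
      rw [hzu, pow_zero, zpow_one]
      exact huZ
    have hzd : z ∈ Subgroup.closure {t₁, w₂, w₃} := by rw [← hZ]; exact hzZ
    obtain ⟨i, j, l, hzdec⟩ := aux_decomp ht₁Z hw₂Z hw₃Z hzd
    have coords : ∀ N : ℕ, ∃ i' j' l' : ℤ,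
        t₁ ^ i = t₁ ^ (P ^ N * i') ∧ w₂ ^ j = w₂ ^ (P ^ N * j') ∧ w₃ ^ l = w₃ ^ (P ^ N * l') := by
      intro N
      obtain ⟨u, huZ, hzu⟩ := hdiv N
      have hud : u ∈ Subgroup.closure {t₁, w₂, w₃} := by rw [← hZ]; exact huZ
      obtain ⟨i', j', l', hudec⟩ := aux_decomp ht₁Z hw₂Z hw₃Z hud
      have hpow : u ^ (P ^ N) = t₁ ^ (i' * P ^ N) * w₂ ^ (j' * P ^ N) * w₃ ^ (l' * P ^ N) := by
        rw [hudec, aux_zpow3 (hW j') (hU l') _ _, ← zpow_mul, ← zpow_mul, ← zpow_mul]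
      have : t₁ ^ i * w₂ ^ j * w₃ ^ l
          = t₁ ^ (i' * P ^ N) * w₂ ^ (j' * P ^ N) * w₃ ^ (l' * P ^ N) := by
        rw [← hpow, ← hzu, hzdec]
      obtain ⟨e1, e2, e3⟩ := sep2 _ _ _ _ _ _ this
      exact ⟨i', j', l', by rwa [mul_comm], by rwa [mul_comm], by rwa [mul_comm]⟩
    have ht1 : t₁ ^ i = 1 := by
      obtain ⟨i', j', l', e1, _, _⟩ := coords m
      rw [e1, zpow_mul, hPm, one_zpow]
    have hw2 : w₂ ^ j = 1 := hdiv₂ j (fun N => by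
      obtain ⟨i', j', l', _, e2, _⟩ := coords N
      exact ⟨j', e2⟩)
    have hw3 : w₃ ^ l = 1 := hdiv₃ l (fun N => by
      obtain ⟨i', j', l', _, _, e3⟩ := coords N
      exact ⟨l', e3⟩)
    rw [hzdec, ht1, hw2, hw3, one_mul, one_mul]
  -- every element of K is killed by p^(m-1)
  have expK : ∀ k ∈ K, k ^ (P ^ (m - 1)) = 1 := by
    intro k hk
    apply divkill
    intro N
    obtain ⟨A, v, hvK, hke⟩ := iter N k hk
    refine ⟨v ^ (P ^ (m - 1)), Subgroup.zpow_mem _ (hKZ hvK) _, ?_⟩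
    have hvc : ∀ g : G, Commute v g := aux_central_comm (hKZ hvK)
    rw [hke, ((hvc (b₃ ^ A)).symm.zpow_right (P ^ N)).mul_zpow, ← zpow_mul, ← zpow_mul,
      ← zpow_mul]
    rw [show A * P ^ (m - 1) = P ^ (m - 1) * A by ring,
      show P ^ N * P ^ (m - 1) = P ^ (m - 1) * P ^ N by ring,
      zpow_mul, hb₃tor, one_zpow, one_mul]
  -- K is cyclic generated by b₃
  have genK : ∀ k ∈ K, ∃ A : ℤ, k = b₃ ^ A := by
    intro k hk
    obtain ⟨A, v, hvK, hke⟩ := iter (m - 1) k hk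
    exact ⟨A, by rw [hke, expK v hvK, mul_one]⟩
  -- now show b₃ = 1
  have hb₃Zd : b₃ ∈ Subgroup.closure {t₁, w₂, w₃} := by rw [← hZ]; exact hb₃Z
  obtain ⟨i, j, l, hbdec⟩ := aux_decomp ht₁Z hw₂Z hw₃Z hb₃Zd
  have hpdvd : P ∣ i := by
    have h1 : b₃ ^ (P ^ (m - 1)) = t₁ ^ (i * P ^ (m - 1)) * w₂ ^ (j * P ^ (m - 1))
        * w₃ ^ (l * P ^ (m - 1)) := by
      rw [hbdec, aux_zpow3 (hW j) (hU l) _ _, ← zpow_mul, ← zpow_mul, ← zpow_mul]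
    have h2 : t₁ ^ (i * P ^ (m - 1)) * w₂ ^ (j * P ^ (m - 1)) * w₃ ^ (l * P ^ (m - 1)) = 1 := by
      rw [← h1, hb₃tor]
    obtain ⟨e1, _, _⟩ := sep1 _ _ _ h2
    have hdvd : ((p ^ m : ℕ) : ℤ) ∣ i * P ^ (m - 1) := by
      rw [← ht₁]
      exact orderOf_dvd_iff_zpow_eq_one.mpr e1
    have hcast : ((p ^ m : ℕ) : ℤ) = P ^ (m - 1) * P := by
      rw [hPdef]
      push_cast
      rw [← pow_succ, Nat.sub_add_cancel hm]
    rw [hcast] at hdvd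
    have hne : P ^ (m - 1) ≠ 0 := pow_ne_zero _ (by
      rw [hPdef]
      exact_mod_cast hp.ne_zero)
    have : P ^ (m - 1) * P ∣ P ^ (m - 1) * i := by
      rwa [mul_comm i (P ^ (m - 1))] at hdvd
    exact (mul_dvd_mul_iff_left hne).mp this
  obtain ⟨v, hvK, hbe⟩ := star b₃ hb₃ i j l hbdec
  obtain ⟨e, hve⟩ := genK v hvK
  have hb₃pow : b₃ ^ ((1 : ℤ) - (i + e * P)) = 1 := by
    have : b₃ = b₃ ^ (i + e * P) := by
      conv_lhs => rw [hbe, hve]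
      rw [← zpow_mul, ← zpow_add]
    rw [zpow_sub, zpow_one, mul_inv_eq_one]
    exact this
  have hb₃1 : b₃ = 1 := by
    set D : ℤ := 1 - (i + e * P) with hD
    have hndvd : ¬ P ∣ D := by
      intro hdvd
      have h1 : P ∣ i + e * P := Dvd.dvd.add hpdvd ⟨e, by ring⟩
      have : P ∣ 1 := by
        have := Dvd.dvd.add hdvd h1
        simpa [hD] using this
      exact (Nat.prime_iff_prime_int.mp hp).not_dvd_one this
    have hcop : IsCoprime (P ^ (m - 1)) D :=
      (((Nat.prime_iff_prime_int.mp hp).coprime_iff_not_dvd).mpr hndvd).pow_left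
    obtain ⟨σ, τ, hst⟩ := hcop
    calc b₃ = b₃ ^ (σ * P ^ (m - 1) + τ * D) := by rw [hst, zpow_one]
      _ = (b₃ ^ (P ^ (m - 1))) ^ σ * (b₃ ^ D) ^ τ := by
          rw [zpow_add, mul_comm σ _, mul_comm τ _, zpow_mul, zpow_mul]
      _ = 1 := by rw [hb₃tor, hb₃pow, one_zpow, one_zpow, one_mul]
  rw [Subgroup.eq_bot_iff_forall]
  intro k hk
  obtain ⟨A, hke⟩ := genK k hk
  rw [hke, hb₃1, one_zpow]




lemma aux_master (p m : ℕ) (hp : p.Prime) (hm : 1 ≤ m)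
    (x y t₁ w₂ w₃ : G)
    (hgen : Subgroup.closure {x, y, t₁, w₂, w₃} = ⊤)
    (hZ : Subgroup.center G = Subgroup.closure {t₁, w₂, w₃})
    (hI1 : Subgroup.zpowers t₁ ⊓ Subgroup.closure {w₂, w₃} = ⊥)
    (hI2 : Subgroup.zpowers w₂ ⊓ Subgroup.closure {t₁, w₃} = ⊥)
    (ht₁ : orderOf t₁ = p ^ m)
    (hdiv₂ : ∀ b : ℤ, (∀ N : ℕ, ∃ b' : ℤ, w₂ ^ b = w₂ ^ ((p:ℤ)^N * b')) → w₂ ^ b = 1)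
    (hdiv₃ : ∀ b : ℤ, (∀ N : ℕ, ∃ b' : ℤ, w₃ ^ b = w₃ ^ ((p:ℤ)^N * b')) → w₃ ^ b = 1)
    (hx : x ^ p = w₂) (hy : y ^ p = w₃)
    (hrel : x⁻¹ * y⁻¹ * x * y = t₁ ^ p ^ (m - 1)) :
    ∀ H K : Subgroup G,
      (∀ h ∈ H, ∀ k ∈ K, Commute h k) → H ⊓ K = ⊥ →
      (∀ g : G, ∃ h ∈ H, ∃ k ∈ K, g = h * k) → H = ⊥ ∨ K = ⊥ := by
  intro H K hcomm hdisj hsurj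
  have ht₁Z : t₁ ∈ Subgroup.center G := by
    rw [hZ]; exact Subgroup.subset_closure (by simp)
  have hw₂Z : w₂ ∈ Subgroup.center G := by
    rw [hZ]; exact Subgroup.subset_closure (by simp)
  have hw₃Z : w₃ ∈ Subgroup.center G := by
    rw [hZ]; exact Subgroup.subset_closure (by simp)
  have hccZ : t₁ ^ p ^ (m - 1) ∈ Subgroup.center G := Subgroup.pow_mem _ ht₁Z _
  have hcin : ∀ g g' : G, g⁻¹ * g'⁻¹ * g * g' ∈ Subgroup.zpowers (t₁ ^ p ^ (m - 1)) :=
    aux_commutator_mem hgen ht₁Z hw₂Z hw₃Z hrel hccZ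
  have hcp : (t₁ ^ p ^ (m - 1)) ^ (p : ℤ) = 1 := by
    rw [zpow_natCast, ← pow_mul, ← pow_succ, Nat.sub_add_cancel hm, ← ht₁, pow_orderOf_eq_one]
  by_cases hK : ∀ k ∈ K, ∀ k' ∈ K, Commute k k'
  · right
    have hKZ : K ≤ Subgroup.center G := by
      intro k hk
      rw [Subgroup.mem_center_iff]
      intro g
      obtain ⟨h, hh, k', hk', rfl⟩ := hsurj g
      have c1 : Commute k h := (hcomm h hh k hk).symm
      have c2 : Commute k k' := hK k hk k' hk'
      calc h * k' * k = h * (k * k') := by rw [mul_assoc, ← c2.symm.eq]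
        _ = h * k * k' := by rw [← mul_assoc]
        _ = k * h * k' := by rw [← c1.symm.eq]
        _ = k * (h * k') := by rw [mul_assoc]
    exact aux_core p m hp hm x y t₁ w₂ w₃ hZ hI1 hI2 ht₁ hdiv₂ hdiv₃ hx hy hrel H K
      hcomm hdisj hsurj hKZ
  · left
    push_neg at hK
    obtain ⟨k, hk, k', hk', hkk'⟩ := hK
    have hH : ∀ h ∈ H, ∀ h' ∈ H, Commute h h' := by
      intro h hh h' hh'
      by_contra hne
      have hγ : h⁻¹ * h'⁻¹ * h * h' ≠ 1 := fun h1 => hne (aux_commute_of_eq_one h1)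
      have hδ : k⁻¹ * k'⁻¹ * k * k' ≠ 1 := fun h1 => hkk' (aux_commute_of_eq_one h1)
      obtain ⟨iγ, hiγ⟩ := Subgroup.mem_zpowers_iff.mp (hcin h h')
      obtain ⟨iδ, hiδ⟩ := Subgroup.mem_zpowers_iff.mp (hcin k k')
      have hpiγ : ¬ (p:ℤ) ∣ iγ := by
        rintro ⟨s, rfl⟩
        apply hγ
        rw [← hiγ, zpow_mul, hcp, one_zpow]
      have hcop : IsCoprime iγ ((p:ℤ)) :=
        (((Nat.prime_iff_prime_int.mp hp).coprime_iff_not_dvd).mpr hpiγ).symm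
      obtain ⟨σ, τ, hst⟩ := hcop
      have hδH : k⁻¹ * k'⁻¹ * k * k' ∈ H := by
        have hkey : (t₁ ^ p ^ (m - 1)) ^ iδ
            = ((t₁ ^ p ^ (m - 1)) ^ iγ) ^ (σ * iδ) * ((t₁ ^ p ^ (m - 1)) ^ (p:ℤ)) ^ (τ * iδ) := by
          rw [← zpow_mul, ← zpow_mul, ← zpow_add]
          congr 1
          have : iγ * (σ * iδ) + (p:ℤ) * (τ * iδ) = (σ * iγ + τ * p) * iδ := by ring
          rw [this, hst, one_mul]
        rw [← hiδ, hkey, hcp, one_zpow, mul_one, hiγ]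
        exact Subgroup.zpow_mem _ (Subgroup.mul_mem _ (Subgroup.mul_mem _ (Subgroup.mul_mem _
          (Subgroup.inv_mem _ hh) (Subgroup.inv_mem _ hh')) hh) hh') _
      have hδK : k⁻¹ * k'⁻¹ * k * k' ∈ K :=
        Subgroup.mul_mem _ (Subgroup.mul_mem _ (Subgroup.mul_mem _
          (Subgroup.inv_mem _ hk) (Subgroup.inv_mem _ hk')) hk) hk'
      apply hδ
      have : k⁻¹ * k'⁻¹ * k * k' ∈ H ⊓ K := ⟨hδH, hδK⟩
      rw [hdisj] at this
      exact this
    have hHZ : H ≤ Subgroup.center G := by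
      intro h hh
      rw [Subgroup.mem_center_iff]
      intro g
      obtain ⟨h', hh', k'', hk'', rfl⟩ := hsurj g
      have c1 : Commute h h' := hH h hh h' hh'
      have c2 : Commute h k'' := hcomm h hh k'' hk''
      calc h' * k'' * h = h' * (h * k'') := by rw [mul_assoc, ← c2.symm.eq]
        _ = h' * h * k'' := by rw [← mul_assoc]
        _ = h * h' * k'' := by rw [← c1.symm.eq]
        _ = h * (h' * k'') := by rw [mul_assoc]
    refine aux_core p m hp hm x y t₁ w₂ w₃ hZ hI1 hI2 ht₁ hdiv₂ hdiv₃ hx hy hrel K H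
      (fun k1 hk1 h1 hh1 => (hcomm h1 hh1 k1 hk1).symm) (by rw [inf_comm]; exact hdisj)
      (fun g => ?_) hHZ
    obtain ⟨h1, hh1, k1, hk1, rfl⟩ := hsurj g
    exact ⟨k1, hk1, h1, hh1, (hcomm h1 hh1 k1 hk1).eq⟩


end Aux

theorem familyG7_to_G9_indecomposable (p : ℕ) (hp : p.Prime) (G : Type*) [Group G]
    (h : (∃ m₁ m₂ m₃, 1 ≤ m₁ ∧ 1 ≤ m₂ ∧ 1 ≤ m₃ ∧ InFamilyG7 p m₁ m₂ m₃ G) ∨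
         (∃ m₁ m₂, 1 ≤ m₁ ∧ 1 ≤ m₂ ∧ InFamilyG8 p m₁ m₂ G) ∨
         (∃ m₁, 1 ≤ m₁ ∧ InFamilyG9 p m₁ G)) :
    IsIndecomposable G := by
  intro H K hc hd hs
  rcases h with ⟨m₁, m₂, m₃, hm₁, hm₂, hm₃, hG7⟩ | ⟨m₁, m₂, hm₁, hm₂, hG8⟩ | ⟨m₁, hm₁, hG9⟩
  · obtain ⟨x, y, t₁, t₂, t₃, hgen, hZ, hI1, hI2, hI3, ht₁, ht₂, ht₃, hx, hy, hrel⟩ := hG7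
    exact aux_master p m₁ hp hm₁ x y t₁ t₂ t₃ hgen hZ hI1 hI2 ht₁
      (aux_div_of_order ht₂) (aux_div_of_order ht₃) hx hy hrel H K hc hd hs
  · obtain ⟨x, y, t₁, t₂, u₁, hgen, hZ, hI1, hI2, hI3, ht₁, ht₂, hu₁, hx, hy, hrel⟩ := hG8
    exact aux_master p m₁ hp hm₁ x y t₁ t₂ u₁ hgen hZ hI1 hI2 ht₁
      (aux_div_of_order ht₂) (aux_div_of_infinite hu₁ hp.one_lt) hx hy hrel H K hc hd hs
  · obtain ⟨x, y, t₁, u₁, u₂, hgen, hZ, hI1, hI2, hI3, ht₁, hu₁, hu₂, hx, hy, hrel⟩ := hG9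
    exact aux_master p m₁ hp hm₁ x y t₁ u₁ u₂ hgen hZ hI1 hI2 ht₁
      (aux_div_of_infinite hu₁ hp.one_lt) (aux_div_of_infinite hu₂ hp.one_lt) hx hy hrel H K hc hd hs
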